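/- Let m ≥ 1 be a natural number, let α : Fin m → ℕ with α i ≥ 1 for all i, and let A, B, M, K ≥ 0, P > 0, c > 0 and 0 < q < 1 be real numbers such that for every i, c²·(m·A + M/(α i + 2)) < (α i + 1)²·(α i)·P² − c·(α i + 1)·((α i)·B·m + K). Fix k ∈ ℕ. Suppose e : Fin m → ℝ satisfies |e i| < c·q^(3^k) for all i, and suppose e' : Fin m → ℝ satisfies, for every i, e' i = [ (1/(α i + 1)!)·(e i)²·(∑_{s} A_{i s}·(e s)) + (1/(α i + 2)!)·Φ_i·(e i)³ ] / [ (1/(α i − 1)!)·((α i + 1)·(f_i)² + ∑_{s} B_{i s}·(e s)) + (1/(α i)!)·Ψ_i·(e i) ], where the real coefficients satisfy |A_{i s}| ≤ A, |B_{i s}| ≤ B, |Φ_i| ≤ M, |Ψ_i| ≤ K and |f_i| ≥ P for all i, s. Then |e' i| < c·q^(3^(k+1)) for every i. -/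

import Mathlib

set_option maxHeartbeats 1000000

lemma key_ineq (N F ε c P A B M K mR : ℝ)
    (hN : 1 ≤ N) (hF : 0 < F) (hε : 0 < ε) (hc : 0 < c)
    (hkey' : c^2*(mR*A*(N+2) + M) < ((N+1)^2*N*P^2 - ε*(N+1)*(N*B*mR+K))*(N+2)) :
    1/((N+1)*(N*F))*ε^2*(mR*(A*ε)) + 1/((N+2)*((N+1)*(N*F)))*M*ε^3
      < ε^3/c^2 * (1/F*((N+1)*P^2 - mR*(B*ε)) - 1/(N*F)*(K*ε)) := by
  have h1 : (0:ℝ) < N := lt_of_lt_of_le one_pos hN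
  have h2 : (0:ℝ) < N+1 := by linarith
  have h3 : (0:ℝ) < N+2 := by linarith
  have hden : (0:ℝ) < c^2*F*N*(N+1)*(N+2) := by positivity
  have hk2 : ε^3 * (c^2*(mR*A*(N+2) + M)) < ε^3 * (((N+1)^2*N*P^2 - ε*(N+1)*(N*B*mR+K))*(N+2)) :=
    mul_lt_mul_of_pos_left hkey' (by positivity)
  have H := (div_lt_div_iff_of_pos_right hden).mpr hk2
  convert H using 1
  · rfl
  · field_simp
  · field_simp
    ring

theorem obreshkoff_ehrlich_one_step_error
    (m : ℕ) (hm : 1 ≤ m) (α : Fin m → ℕ) (hα : ∀ i, 1 ≤ α i)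
    (A B M K P c q : ℝ) (hA : 0 ≤ A) (hB : 0 ≤ B) (hM : 0 ≤ M) (hK : 0 ≤ K)
    (hP : 0 < P) (hc : 0 < c) (hq0 : 0 < q) (hq1 : q < 1)
    (hineq : ∀ i, c ^ 2 * ((m : ℝ) * A + M / ((α i : ℝ) + 2)) <
      ((α i : ℝ) + 1) ^ 2 * (α i : ℝ) * P ^ 2
        - c * ((α i : ℝ) + 1) * ((α i : ℝ) * B * (m : ℝ) + K))
    (k : ℕ) (e e' : Fin m → ℝ)
    (he : ∀ i, |e i| < c * q ^ (3 ^ k))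
    (Acoef Bcoef : Fin m → Fin m → ℝ) (Φ Ψ fval : Fin m → ℝ)
    (hAc : ∀ i s, |Acoef i s| ≤ A) (hBc : ∀ i s, |Bcoef i s| ≤ B)
    (hΦ : ∀ i, |Φ i| ≤ M) (hΨ : ∀ i, |Ψ i| ≤ K) (hf : ∀ i, P ≤ |fval i|)
    (he' : ∀ i, e' i =
      ((1 / ((α i + 1).factorial : ℝ)) * (e i) ^ 2 * (∑ s, Acoef i s * e s)
          + (1 / ((α i + 2).factorial : ℝ)) * Φ i * (e i) ^ 3) /
        ((1 / ((α i - 1).factorial : ℝ)) *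
            (((α i : ℝ) + 1) * (fval i) ^ 2 + ∑ s, Bcoef i s * e s)
          + (1 / ((α i).factorial : ℝ)) * Ψ i * (e i))) :
    ∀ i, |e' i| < c * q ^ (3 ^ (k + 1)) := by
  intro i
  set n := α i with hn
  have hn1 : 1 ≤ n := hα i
  have hnn : n - 1 + 1 = n := Nat.succ_pred_eq_of_pos hn1
  set N : ℝ := (n : ℝ) with hNdef
  have hN1 : (1:ℝ) ≤ N := Nat.one_le_cast.mpr hn1
  have hNpos : (0:ℝ) < N := lt_of_lt_of_le one_pos hN1
  set F : ℝ := ((n-1).factorial : ℝ) with hFdef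
  have hFpos : 0 < F := Nat.cast_pos.mpr (Nat.factorial_pos _)
  have hfac0 : ((n).factorial : ℝ) = N * F := by
    conv_lhs => rw [← hnn, Nat.factorial_succ, hnn]
    push_cast; ring
  have hfac1 : ((n+1).factorial : ℝ) = (N+1) * (N * F) := by
    rw [Nat.factorial_succ]; push_cast [hfac0]; ring
  have hfac2 : ((n+2).factorial : ℝ) = (N+2) * ((N+1) * (N * F)) := by
    rw [show n+2 = (n+1)+1 by ring, Nat.factorial_succ]; push_cast [hfac1]; ring
  set ε : ℝ := c * q ^ (3 ^ k) with hεdef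
  have hεpos : 0 < ε := by positivity
  have hεc : ε ≤ c := by
    have : q ^ (3^k) ≤ 1 := pow_le_one₀ hq0.le hq1.le
    nlinarith
  -- sum bounds
  have hSA : |∑ s, Acoef i s * e s| ≤ (m:ℝ) * (A * ε) := by
    calc |∑ s, Acoef i s * e s| ≤ ∑ s, |Acoef i s * e s| := Finset.abs_sum_le_sum_abs _ _
      _ ≤ ∑ _s : Fin m, A * ε := Finset.sum_le_sum (fun s _ => by
          rw [abs_mul]
          exact mul_le_mul (hAc i s) (he s).le (abs_nonneg _) hA)
      _ = (m:ℝ) * (A * ε) := by simp [Finset.sum_const, Finset.card_univ]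
  have hSB : |∑ s, Bcoef i s * e s| ≤ (m:ℝ) * (B * ε) := by
    calc |∑ s, Bcoef i s * e s| ≤ ∑ s, |Bcoef i s * e s| := Finset.abs_sum_le_sum_abs _ _
      _ ≤ ∑ _s : Fin m, B * ε := Finset.sum_le_sum (fun s _ => by
          rw [abs_mul]
          exact mul_le_mul (hBc i s) (he s).le (abs_nonneg _) hB)
      _ = (m:ℝ) * (B * ε) := by simp [Finset.sum_const, Finset.card_univ]
  have hei : |e i| ≤ ε := (he i).le
  -- numerator bound
  set Num : ℝ := (1 / ((n + 1).factorial : ℝ)) * (e i) ^ 2 * (∑ s, Acoef i s * e s)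
          + (1 / ((n + 2).factorial : ℝ)) * Φ i * (e i) ^ 3 with hNum
  set Den : ℝ := (1 / ((n - 1).factorial : ℝ)) *
            ((N + 1) * (fval i) ^ 2 + ∑ s, Bcoef i s * e s)
          + (1 / ((n).factorial : ℝ)) * Ψ i * (e i) with hDen
  set Nb : ℝ := 1/((N+1)*(N*F))*ε^2*((m:ℝ)*(A*ε)) + 1/((N+2)*((N+1)*(N*F)))*M*ε^3 with hNb
  have hNumb : |Num| ≤ Nb := by
    rw [hNum, hNb]
    have hp1 : (0:ℝ) < 1/((N+1)*(N*F)) := by positivity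
    have hp2 : (0:ℝ) < 1/((N+2)*((N+1)*(N*F))) := by positivity
    have t1 : |(1 / ((n + 1).factorial : ℝ)) * (e i) ^ 2 * (∑ s, Acoef i s * e s)|
        ≤ 1/((N+1)*(N*F))*ε^2*((m:ℝ)*(A*ε)) := by
      rw [abs_mul, abs_mul, abs_pow, hfac1, abs_of_pos hp1]
      apply mul_le_mul _ hSA (abs_nonneg _) (by positivity)
      exact mul_le_mul le_rfl (pow_le_pow_left₀ (abs_nonneg _) hei 2) (by positivity) hp1.le
    have t2 : |(1 / ((n + 2).factorial : ℝ)) * Φ i * (e i) ^ 3|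
        ≤ 1/((N+2)*((N+1)*(N*F)))*M*ε^3 := by
      rw [abs_mul, abs_mul, abs_pow, hfac2, abs_of_pos hp2]
      apply mul_le_mul _ (pow_le_pow_left₀ (abs_nonneg _) hei 3) (by positivity) (by positivity)
      exact mul_le_mul le_rfl (hΦ i) (abs_nonneg _) hp2.le
    calc |_ + _| ≤ _ := abs_add_le _ _
      _ ≤ _ := add_le_add t1 t2
  -- denominator lower bound
  set Dl : ℝ := 1/F*((N+1)*P^2 - (m:ℝ)*(B*ε)) - 1/(N*F)*(K*ε) with hDl
  have hDenl : Dl ≤ Den := by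
    rw [hDl, hDen, hfac0, ← hFdef]
    have hf2 : P^2 ≤ (fval i)^2 := by
      have := hf i
      nlinarith [abs_nonneg (fval i), sq_abs (fval i)]
    have hSB' : -((m:ℝ)*(B*ε)) ≤ ∑ s, Bcoef i s * e s := by
      have := neg_abs_le (∑ s, Bcoef i s * e s); linarith
    have hΨe : -(K*ε) ≤ Ψ i * e i := by
      have h1 : |Ψ i * e i| ≤ K * ε := by
        rw [abs_mul]
        exact mul_le_mul (hΨ i) hei (abs_nonneg _) hK
      have := neg_abs_le (Ψ i * e i); linarith
    have hFi : (0:ℝ) < 1/F := by positivity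
    have hNFi : (0:ℝ) < 1/(N*F) := by positivity
    have h1 : 1/F*((N+1)*P^2 - (m:ℝ)*(B*ε)) ≤ 1/F*((N + 1) * (fval i) ^ 2 + ∑ s, Bcoef i s * e s) := by
      apply mul_le_mul_of_nonneg_left _ hFi.le
      nlinarith
    have h2 : -(1/(N*F)*(K*ε)) ≤ 1/(N*F) * Ψ i * (e i) := by
      rw [mul_assoc, show -(1/(N*F)*(K*ε)) = 1/(N*F) * (-(K*ε)) by ring]
      exact mul_le_mul_of_nonneg_left hΨe hNFi.le
    linarith
  -- key inequality
  have hN2 : (0:ℝ) < N + 2 := by linarith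
  have hkey' : c^2*((m:ℝ)*A*(N+2) + M) < ((N+1)^2*N*P^2 - ε*(N+1)*(N*B*(m:ℝ)+K))*(N+2) := by
    have h := hineq i
    rw [← hn, ← hNdef] at h
    have hmono : ε * (N+1) * (N*B*(m:ℝ)+K) ≤ c * (N+1) * (N*B*(m:ℝ)+K) := by
      have hm0 : (0:ℝ) ≤ (m:ℝ) := Nat.cast_nonneg m
      apply mul_le_mul_of_nonneg_right _ (by positivity : (0:ℝ) ≤ N*B*(m:ℝ)+K)
      exact mul_le_mul_of_nonneg_right hεc (by linarith)
    calc c^2*((m:ℝ)*A*(N+2) + M)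
        = c^2*((m:ℝ)*A + M/(N+2)) * (N+2) := by field_simp
      _ < ((N+1)^2*N*P^2 - c*(N+1)*(N*B*(m:ℝ)+K)) * (N+2) := mul_lt_mul_of_pos_right h hN2
      _ ≤ ((N+1)^2*N*P^2 - ε*(N+1)*(N*B*(m:ℝ)+K))*(N+2) := by
          apply mul_le_mul_of_nonneg_right _ hN2.le
          linarith
  have hKEY : Nb < ε^3/c^2 * Dl := by
    rw [hNb, hDl]
    exact key_ineq N F ε c P A B M K (m:ℝ) hN1 hFpos hεpos hc hkey'
  have hNbnn : 0 ≤ Nb := le_trans (abs_nonneg _) hNumb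
  have hTDl : 0 < ε^3/c^2 * Dl := lt_of_le_of_lt hNbnn hKEY
  have hT2 : (0:ℝ) < ε^3/c^2 := by positivity
  have hDlpos : 0 < Dl := by
    by_contra h
    push_neg at h
    have h2 := mul_nonneg hT2.le (neg_nonneg.mpr h)
    nlinarith
  have hDenpos : 0 < Den := lt_of_lt_of_le hDlpos hDenl
  have hT : c * q ^ (3 ^ (k + 1)) = ε^3/c^2 := by
    rw [hεdef, pow_succ, pow_mul]
    field_simp
  rw [he' i, ← hn, ← hNdef, ← hNum, ← hDen, hT, abs_div, abs_of_pos hDenpos]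
  calc |Num| / Den ≤ Nb / Dl := div_le_div₀ hNbnn hNumb hDlpos hDenl
    _ < ε^3/c^2 := by
        rw [div_lt_iff₀ hDlpos]
        linarith [hKEY]
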